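/- arXiv:2101.09506 — 3 statements merged into one kernel-verified Lean document; each statement's English description precedes it below -/
import Mathlib

section
/- The linear map τ̂₀ is an algebra automorphism of Ĥ, i.e. τ̂₀ is a bijective linear map satisfying τ̂₀(x·y) = τ̂₀(x)·τ̂₀(y) for all x, y ∈ Ĥ. -/
namespace HatAlgebra

/-- Basis of the algebra `Ĥ`: vectors `â i` for `i : ℤ`, `ŝ_{0̄,j}` for `j` a positive
integer, and `ŝ_{1̄,3k}`, `ŝ_{2̄,3k}` for `k` a positive integer. -/
inductive HatB : Type
  | a : ℤ → HatB
  | s0 : ℕ+ → HatB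
  | s1 : ℕ+ → HatB
  | s2 : ℕ+ → HatB
  deriving DecidableEq

variable (F : Type*) [Field F]

/-- The underlying vector space of `Ĥ`: the free `F`-vector space on `HatB`. -/
abbrev HatH : Type _ := HatB →₀ F

/-- The basis vector `â i`. -/
noncomputable def aHat (i : ℤ) : HatH F := Finsupp.single (HatB.a i) 1

/-- The element `ŝ_{r̄,j}` of `Ĥ`, with the conventions `ŝ_{r̄,0} = 0` and
`ŝ_{1̄,j} = ŝ_{0̄,j} = ŝ_{2̄,j}` whenever `3 ∤ j`. -/
noncomputable def sHat (r : ZMod 3) (j : ℕ) : HatH F :=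
  if h : j = 0 then 0
  else if h3 : 3 ∣ j then
    if r = 0 then Finsupp.single (HatB.s0 ⟨j, Nat.pos_of_ne_zero h⟩) 1
    else if r = 1 then
      Finsupp.single (HatB.s1 ⟨j / 3,
        Nat.div_pos (Nat.le_of_dvd (Nat.pos_of_ne_zero h) h3) (by norm_num)⟩) 1
    else
      Finsupp.single (HatB.s2 ⟨j / 3,
        Nat.div_pos (Nat.le_of_dvd (Nat.pos_of_ne_zero h) h3) (by norm_num)⟩) 1
  else Finsupp.single (HatB.s0 ⟨j, Nat.pos_of_ne_zero h⟩) 1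

/-- The operation `∗`: `(−1) ∗ 1̄ = −1`, `(−1) ∗ 2̄ = 1`, `0 ∗ t̄ = 0`. -/
def hatStar (x : ℤ) (t : ZMod 3) : ℤ :=
  if x = 0 then 0 else if t = 1 then -1 else if t = 2 then 1 else 0

/-- The coefficient `(δ_{ī,r̄} − 1) ∗ (ī − r̄)` appearing in rule (Ĥ2). -/
def hatC (i r : ZMod 3) : ℤ := hatStar ((if i = r then 1 else 0) - 1) (i - r)

/-- Rule (Ĥ2): the product `â_i · ŝ_{r̄,j}`. -/
noncomputable def aMulS (i : ℤ) (r : ZMod 3) (j : ℕ) : HatH F :=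
  (-2 : F) • aHat F i + (aHat F (i - (j : ℤ)) + aHat F (i + (j : ℤ))) - sHat F r j
    - (hatC (i : ZMod 3) r : F) • (sHat F (r - 1) j - sHat F (r + 1) j)

/-- `ŝ_{0̄,n} + ŝ_{1̄,n} + ŝ_{2̄,n}`. -/
noncomputable def sSum (n : ℕ) : HatH F := sHat F 0 n + sHat F 1 n + sHat F 2 n

/-- For `r ≠ t` in `ℤ/3ℤ`, the signed sum `ŝ_{r̄,n} + ŝ_{t̄,n} − ŝ_{m̄,n}` where `m̄`
is the third residue class (appearing in rules (Ĥ5), (Ĥ6), (Ĥ7)). -/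
noncomputable def sT (r t : ZMod 3) (n : ℕ) : HatH F :=
  sHat F r n + sHat F t n - sHat F (-(r + t)) n

/-- Rules (Ĥ3)–(Ĥ7): the product `ŝ_{r̄,i} · ŝ_{t̄,j}`. -/
noncomputable def sMulS (r : ZMod 3) (i : ℕ) (t : ZMod 3) (j : ℕ) : HatH F :=
  if 3 ∣ i ∧ 3 ∣ j then
    if r = t then
      (2 : F) • (sHat F r i + sHat F r j) - (sHat F r (Nat.dist i j) + sHat F r (i + j))
    else
      (2 : F) • (sT F r t i + sT F r t j) - (sT F r t (Nat.dist i j) + sT F r t (i + j))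
  else
    (2 : F) • (sHat F r i + sHat F t j) - (2 : F) • (sSum F (Nat.dist i j) + sSum F (i + j))

/-- The product of `Ĥ` on basis vectors, given by rules (Ĥ1)–(Ĥ7) (extended
symmetrically, since the product is commutative). -/
noncomputable def mulB : HatB → HatB → HatH F
  | .a i, .a j => (-2 : F) • (aHat F i + aHat F j) + sHat F (i : ZMod 3) (i - j).natAbs
  | .a i, .s0 j => aMulS F i 0 (j : ℕ)
  | .s0 j, .a i => aMulS F i 0 (j : ℕ)
  | .a i, .s1 k => aMulS F i 1 (3 * (k : ℕ))
  | .s1 k, .a i => aMulS F i 1 (3 * (k : ℕ))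
  | .a i, .s2 k => aMulS F i 2 (3 * (k : ℕ))
  | .s2 k, .a i => aMulS F i 2 (3 * (k : ℕ))
  | .s0 i, .s0 j => sMulS F 0 (i : ℕ) 0 (j : ℕ)
  | .s0 i, .s1 k => sMulS F 0 (i : ℕ) 1 (3 * (k : ℕ))
  | .s1 k, .s0 i => sMulS F 0 (i : ℕ) 1 (3 * (k : ℕ))
  | .s0 i, .s2 k => sMulS F 0 (i : ℕ) 2 (3 * (k : ℕ))
  | .s2 k, .s0 i => sMulS F 0 (i : ℕ) 2 (3 * (k : ℕ))
  | .s1 h, .s1 k => sMulS F 1 (3 * (h : ℕ)) 1 (3 * (k : ℕ))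
  | .s1 h, .s2 k => sMulS F 1 (3 * (h : ℕ)) 2 (3 * (k : ℕ))
  | .s2 k, .s1 h => sMulS F 1 (3 * (h : ℕ)) 2 (3 * (k : ℕ))
  | .s2 h, .s2 k => sMulS F 2 (3 * (h : ℕ)) 2 (3 * (k : ℕ))

/-- The commutative bilinear product of `Ĥ`, as a bilinear map. -/
noncomputable def hatMul : HatH F →ₗ[F] HatH F →ₗ[F] HatH F :=
  Finsupp.lift (HatH F →ₗ[F] HatH F) F HatB fun x => Finsupp.lift (HatH F) F HatB (mulB F x)

/-- The product of two elements of `Ĥ`. -/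
noncomputable def hmul (x y : HatH F) : HatH F := hatMul F x y


/-- The linear map `τ̂₀`, determined on basis vectors by `â_i ↦ â_{−i}`,
`ŝ_{0̄,j} ↦ ŝ_{0̄,j}`, `ŝ_{1̄,3k} ↦ ŝ_{2̄,3k}`, `ŝ_{2̄,3k} ↦ ŝ_{1̄,3k}`. -/
noncomputable def tau0B : HatB → HatH F
  | .a i => aHat F (-i)
  | .s0 j => sHat F 0 (j : ℕ)
  | .s1 k => sHat F 2 (3 * (k : ℕ))
  | .s2 k => sHat F 1 (3 * (k : ℕ))

noncomputable def tau0 : HatH F →ₗ[F] HatH F := Finsupp.lift (HatH F) F HatB (tau0B F)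


lemma lift_single {M : Type*} [AddCommGroup M] [Module F M] (f : HatB → M) (b : HatB) :
    Finsupp.lift M F HatB f (Finsupp.single b 1) = f b := by
  rw [Finsupp.lift_apply, Finsupp.sum_single_index (by simp), one_smul]

lemma tau0_single (b : HatB) : tau0 F (Finsupp.single b 1) = tau0B F b :=
  lift_single F _ b

lemma hmul_single (b c : HatB) :
    hmul F (Finsupp.single b 1) (Finsupp.single c 1) = mulB F b c := by
  show Finsupp.lift (HatH F →ₗ[F] HatH F) F HatB _ (Finsupp.single b 1) (Finsupp.single c 1) = _
  rw [lift_single F (fun x => Finsupp.lift (HatH F) F HatB (mulB F x)) b, lift_single]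

lemma sHat_zero (r : ZMod 3) : sHat F r 0 = 0 := by simp [sHat]

lemma tau0_aHat (i : ℤ) : tau0 F (aHat F i) = aHat F (-i) := tau0_single F (.a i)

lemma sHat_s0 (j : ℕ+) : sHat F 0 (j : ℕ) = Finsupp.single (HatB.s0 j) 1 := by
  have hj : (j : ℕ) ≠ 0 := j.pos.ne'
  rw [sHat, dif_neg hj]
  split_ifs <;> first | rfl | exact absurd rfl (by assumption)

lemma sHat_s1 (k : ℕ+) : sHat F 1 (3 * (k : ℕ)) = Finsupp.single (HatB.s1 k) 1 := by
  have hj : 3 * (k : ℕ) ≠ 0 := by positivity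
  rw [sHat, dif_neg hj, dif_pos ⟨k, rfl⟩, if_neg (by decide), if_pos rfl]
  congr 2
  exact Subtype.ext (show 3 * (k:ℕ) / 3 = (k:ℕ) by omega)

lemma sHat_s2 (k : ℕ+) : sHat F 2 (3 * (k : ℕ)) = Finsupp.single (HatB.s2 k) 1 := by
  have hj : 3 * (k : ℕ) ≠ 0 := by positivity
  rw [sHat, dif_neg hj, dif_pos ⟨k, rfl⟩, if_neg (by decide), if_neg (by decide)]
  congr 2
  exact Subtype.ext (show 3 * (k:ℕ) / 3 = (k:ℕ) by omega)

lemma sHat_not_dvd {j : ℕ} (h : ¬ 3 ∣ j) (r t : ZMod 3) : sHat F r j = sHat F t j := by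
  have hj : j ≠ 0 := by rintro rfl; exact h ⟨0, rfl⟩
  rw [sHat, sHat, dif_neg hj, dif_neg hj, dif_neg h, dif_neg h]

lemma zmod3_cases (r : ZMod 3) : r = 0 ∨ r = 1 ∨ r = 2 := by revert r; decide

lemma tau0_sHat (r : ZMod 3) (j : ℕ) : tau0 F (sHat F r j) = sHat F (-r) j := by
  rcases Nat.eq_zero_or_pos j with rfl | hj
  · simp [sHat_zero]
  by_cases h3 : 3 ∣ j
  · obtain ⟨k, rfl⟩ := h3
    have hk : 0 < k := by omega
    lift k to ℕ+ using hk
    rcases zmod3_cases r with rfl | rfl | rfl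
    · have e : (3:ℕ) * (k:ℕ) = ((3*k : ℕ+) : ℕ) := by push_cast; ring
      rw [neg_zero, e, sHat_s0, tau0_single]
      show sHat F 0 _ = _
      rw [sHat_s0]
    · rw [sHat_s1, tau0_single, show (-1 : ZMod 3) = 2 from by decide]
      rfl
    · rw [sHat_s2, tau0_single, show (-2 : ZMod 3) = 1 from by decide]
      rfl
  · rw [sHat_not_dvd F h3 r 0, sHat_not_dvd F h3 (-r) 0]
    have e : sHat F 0 j = Finsupp.single (HatB.s0 ⟨j, hj⟩) 1 := sHat_s0 F ⟨j, hj⟩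
    rw [e, tau0_single]
    exact sHat_s0 F ⟨j, hj⟩

lemma hatC_neg : ∀ i r : ZMod 3, hatC (-i) (-r) = - hatC i r := by decide

lemma tau0_aMulS (i : ℤ) (r : ZMod 3) (j : ℕ) :
    tau0 F (aMulS F i r j) = aMulS F (-i) (-r) j := by
  simp only [aMulS, map_add, map_sub, map_smul, tau0_aHat, tau0_sHat]
  rw [show ((-i : ℤ) : ZMod 3) = -((i : ℤ) : ZMod 3) by push_cast; ring, hatC_neg,
    show -(i - (j:ℤ)) = -i + (j:ℤ) by ring, show -(i + (j:ℤ)) = -i - (j:ℤ) by ring,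
    show -(r - 1) = -r + 1 by ring, show -(r + 1) = -r - 1 by ring]
  push_cast
  module

lemma tau0_sSum (n : ℕ) : tau0 F (sSum F n) = sSum F n := by
  simp only [sSum, map_add, tau0_sHat]
  rw [show (-0 : ZMod 3) = 0 by decide, show (-1 : ZMod 3) = 2 by decide,
    show (-2 : ZMod 3) = 1 by decide]
  abel

lemma tau0_sT (r t : ZMod 3) (n : ℕ) : tau0 F (sT F r t n) = sT F (-r) (-t) n := by
  simp only [sT, map_add, map_sub, tau0_sHat]
  rw [show -(-(r + t)) = -(-r + -t) + 0 by ring]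
  rw [add_zero]

lemma tau0_sMulS (r : ZMod 3) (i : ℕ) (t : ZMod 3) (j : ℕ) :
    tau0 F (sMulS F r i t j) = sMulS F (-r) i (-t) j := by
  unfold sMulS
  by_cases h : 3 ∣ i ∧ 3 ∣ j
  · by_cases hrt : r = t
    · subst hrt
      rw [if_pos h, if_pos h, if_pos rfl, if_pos rfl]
      simp only [map_sub, map_add, map_smul, tau0_sHat]
    · rw [if_pos h, if_pos h, if_neg hrt, if_neg (fun hh => hrt (neg_inj.mp hh))]
      simp only [map_sub, map_add, map_smul, tau0_sT]
  · rw [if_neg h, if_neg h]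
    simp only [map_sub, map_add, map_smul, tau0_sHat, tau0_sSum]

lemma aMulS_zero (i : ℤ) (r : ZMod 3) : aMulS F i r 0 = 0 := by
  simp only [aMulS, sHat_zero, Nat.cast_zero, sub_zero, add_zero, smul_zero, sub_self]
  module

lemma aMulS_not_dvd {j : ℕ} (h : ¬ 3 ∣ j) (i : ℤ) (r : ZMod 3) :
    aMulS F i r j = aMulS F i 0 j := by
  unfold aMulS
  rw [sHat_not_dvd F h r 0, sHat_not_dvd F h (r-1) (r+1), sHat_not_dvd F h (0-1) (0+1),
    sub_self, sub_self, smul_zero, smul_zero]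

lemma hmul_aHat_sHat (i : ℤ) (r : ZMod 3) (j : ℕ) :
    hmul F (aHat F i) (sHat F r j) = aMulS F i r j := by
  rcases Nat.eq_zero_or_pos j with rfl | hj
  · show hatMul F _ _ = _
    rw [sHat_zero, map_zero, aMulS_zero]
  by_cases h3 : 3 ∣ j
  · obtain ⟨k, rfl⟩ := h3
    have hk : 0 < k := by omega
    lift k to ℕ+ using hk
    rcases zmod3_cases r with rfl | rfl | rfl
    · have e : sHat F 0 (3 * (k:ℕ)) = Finsupp.single (HatB.s0 ⟨3 * (k:ℕ), hj⟩) 1 :=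
        sHat_s0 F ⟨3 * (k:ℕ), hj⟩
      rw [e, aHat, hmul_single]
      rfl
    · rw [sHat_s1, aHat, hmul_single]
      rfl
    · rw [sHat_s2, aHat, hmul_single]
      rfl
  · rw [sHat_not_dvd F h3 r 0,
      show sHat F 0 j = Finsupp.single (HatB.s0 ⟨j, hj⟩) 1 from sHat_s0 F ⟨j, hj⟩,
      aHat, hmul_single, aMulS_not_dvd F h3]
    rfl

lemma hmul_sHat_aHat (i : ℤ) (r : ZMod 3) (j : ℕ) :
    hmul F (sHat F r j) (aHat F i) = aMulS F i r j := by
  rcases Nat.eq_zero_or_pos j with rfl | hj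
  · show hatMul F _ _ = _
    rw [sHat_zero, map_zero, LinearMap.zero_apply, aMulS_zero]
  by_cases h3 : 3 ∣ j
  · obtain ⟨k, rfl⟩ := h3
    have hk : 0 < k := by omega
    lift k to ℕ+ using hk
    rcases zmod3_cases r with rfl | rfl | rfl
    · have e : sHat F 0 (3 * (k:ℕ)) = Finsupp.single (HatB.s0 ⟨3 * (k:ℕ), hj⟩) 1 :=
        sHat_s0 F ⟨3 * (k:ℕ), hj⟩
      rw [e, aHat, hmul_single]
      rfl
    · rw [sHat_s1, aHat, hmul_single]
      rfl
    · rw [sHat_s2, aHat, hmul_single]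
      rfl
  · rw [sHat_not_dvd F h3 r 0,
      show sHat F 0 j = Finsupp.single (HatB.s0 ⟨j, hj⟩) 1 from sHat_s0 F ⟨j, hj⟩,
      aHat, hmul_single, aMulS_not_dvd F h3]
    rfl


lemma sT_comm (r t : ZMod 3) (n : ℕ) : sT F r t n = sT F t r n := by
  unfold sT
  rw [add_comm t r]
  abel

lemma sMulS_comm (r : ZMod 3) (i : ℕ) (t : ZMod 3) (j : ℕ) :
    sMulS F r i t j = sMulS F t j r i := by
  unfold sMulS
  by_cases h : 3 ∣ i ∧ 3 ∣ j
  · rw [if_pos h, if_pos (And.intro h.2 h.1)]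
    by_cases hrt : r = t
    · subst hrt
      simp only [if_pos rfl]
      rw [Nat.dist_comm, Nat.add_comm]
      abel
    · rw [if_neg hrt, if_neg (Ne.symm hrt), Nat.dist_comm, Nat.add_comm]
      simp only [sT_comm F r t]
      abel
  · rw [if_neg h, if_neg (fun hh => h (And.intro hh.2 hh.1)), Nat.dist_comm j i,
      Nat.add_comm j i]
    abel

lemma sMulS_not_left {i : ℕ} (h : ¬ 3 ∣ i) (r t : ZMod 3) (j : ℕ) :
    sMulS F r i t j = sMulS F 0 i t j := by
  unfold sMulS
  rw [if_neg (fun hh => h hh.1), if_neg (fun hh => h hh.1), sHat_not_dvd F h r 0]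

lemma sMulS_not_right {j : ℕ} (h : ¬ 3 ∣ j) (r t : ZMod 3) (i : ℕ) :
    sMulS F r i t j = sMulS F r i 0 j := by
  rw [sMulS_comm, sMulS_not_left F h, sMulS_comm]

lemma sMulS_zero_left [CharP F 5] (r t : ZMod 3) (j : ℕ) : sMulS F r 0 t j = 0 := by
  unfold sMulS
  by_cases h3 : 3 ∣ j
  · rw [if_pos (And.intro ⟨0, rfl⟩ h3)]
    by_cases hrt : r = t
    · subst hrt
      rw [if_pos rfl, sHat_zero, Nat.dist_zero_left, Nat.zero_add]
      module
    · rw [if_neg hrt, Nat.dist_zero_left, Nat.zero_add]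
      unfold sT
      rw [sHat_zero, sHat_zero, sHat_zero]
      module
  · rw [if_neg (fun hh => h3 hh.2), sHat_zero, Nat.dist_zero_left, Nat.zero_add]
    unfold sSum
    rw [sHat_not_dvd F h3 1 0, sHat_not_dvd F h3 2 0, sHat_not_dvd F h3 t 0]
    have h10 : (10 : F) = 0 := by
      have h5 := CharP.cast_eq_zero F 5
      calc (10 : F) = 2 * 5 := by norm_num
      _ = 0 := by rw [show ((5:ℕ):F) = 5 from by push_cast; rfl] at h5; rw [h5, mul_zero]
    have key : (2:F) • ((0:HatH F) + sHat F 0 j) -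
        (2:F) • ((sHat F 0 j + sHat F 0 j + sHat F 0 j) + (sHat F 0 j + sHat F 0 j + sHat F 0 j))
        = (-10 : F) • sHat F 0 j := by module
    rw [key, show (-10 : F) = -(10:F) from by ring, h10, neg_zero, zero_smul]

lemma sMulS_zero_right [CharP F 5] (r t : ZMod 3) (i : ℕ) : sMulS F r i t 0 = 0 := by
  rw [sMulS_comm, sMulS_zero_left]

lemma hmul_sHat_sHat_aux (r t : ZMod 3) (i j : ℕ) (hi : 0 < i) (hj : 0 < j)
    (hri : 3 ∣ i ∨ r = 0) (htj : 3 ∣ j ∨ t = 0) :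
    hmul F (sHat F r i) (sHat F t j) = sMulS F r i t j := by
  have es0 : ∀ (n : ℕ) (hn : 0 < n), sHat F 0 n = Finsupp.single (HatB.s0 ⟨n, hn⟩) 1 :=
    fun n hn => sHat_s0 F ⟨n, hn⟩
  rcases zmod3_cases r with rfl | rfl | rfl <;> rcases zmod3_cases t with rfl | rfl | rfl
  -- (0,0)
  · rw [es0 i hi, es0 j hj, hmul_single]
    rfl
  -- (0,1)
  · have h3j : 3 ∣ j := htj.resolve_right (by decide)
    obtain ⟨k, rfl⟩ := h3j
    have hk : 0 < k := by omega
    lift k to ℕ+ using hk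
    rw [es0 i hi, sHat_s1, hmul_single]
    rfl
  -- (0,2)
  · have h3j : 3 ∣ j := htj.resolve_right (by decide)
    obtain ⟨k, rfl⟩ := h3j
    have hk : 0 < k := by omega
    lift k to ℕ+ using hk
    rw [es0 i hi, sHat_s2, hmul_single]
    rfl
  -- (1,0)
  · have h3i : 3 ∣ i := hri.resolve_right (by decide)
    obtain ⟨h, rfl⟩ := h3i
    have hh : 0 < h := by omega
    lift h to ℕ+ using hh
    rw [es0 j hj, sHat_s1, hmul_single, sMulS_comm]
    rfl
  -- (1,1)
  · have h3i : 3 ∣ i := hri.resolve_right (by decide)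
    have h3j : 3 ∣ j := htj.resolve_right (by decide)
    obtain ⟨h, rfl⟩ := h3i
    obtain ⟨k, rfl⟩ := h3j
    have hh : 0 < h := by omega
    have hk : 0 < k := by omega
    lift h to ℕ+ using hh
    lift k to ℕ+ using hk
    rw [sHat_s1, sHat_s1, hmul_single]
    rfl
  -- (1,2)
  · have h3i : 3 ∣ i := hri.resolve_right (by decide)
    have h3j : 3 ∣ j := htj.resolve_right (by decide)
    obtain ⟨h, rfl⟩ := h3i
    obtain ⟨k, rfl⟩ := h3j
    have hh : 0 < h := by omega
    have hk : 0 < k := by omega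
    lift h to ℕ+ using hh
    lift k to ℕ+ using hk
    rw [sHat_s1, sHat_s2, hmul_single]
    rfl
  -- (2,0)
  · have h3i : 3 ∣ i := hri.resolve_right (by decide)
    obtain ⟨h, rfl⟩ := h3i
    have hh : 0 < h := by omega
    lift h to ℕ+ using hh
    rw [es0 j hj, sHat_s2, hmul_single, sMulS_comm]
    rfl
  -- (2,1)
  · have h3i : 3 ∣ i := hri.resolve_right (by decide)
    have h3j : 3 ∣ j := htj.resolve_right (by decide)
    obtain ⟨h, rfl⟩ := h3i
    obtain ⟨k, rfl⟩ := h3j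
    have hh : 0 < h := by omega
    have hk : 0 < k := by omega
    lift h to ℕ+ using hh
    lift k to ℕ+ using hk
    rw [sHat_s2, sHat_s1, hmul_single, sMulS_comm]
    rfl
  -- (2,2)
  · have h3i : 3 ∣ i := hri.resolve_right (by decide)
    have h3j : 3 ∣ j := htj.resolve_right (by decide)
    obtain ⟨h, rfl⟩ := h3i
    obtain ⟨k, rfl⟩ := h3j
    have hh : 0 < h := by omega
    have hk : 0 < k := by omega
    lift h to ℕ+ using hh
    lift k to ℕ+ using hk
    rw [sHat_s2, sHat_s2, hmul_single]
    rfl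

lemma hmul_sHat_sHat [CharP F 5] (r t : ZMod 3) (i j : ℕ) :
    hmul F (sHat F r i) (sHat F t j) = sMulS F r i t j := by
  rcases Nat.eq_zero_or_pos i with rfl | hi
  · show hatMul F _ _ = _
    rw [sHat_zero, map_zero, LinearMap.zero_apply, sMulS_zero_left]
  rcases Nat.eq_zero_or_pos j with rfl | hj
  · show hatMul F _ _ = _
    rw [sHat_zero (F := F) t, map_zero, sMulS_zero_right]
  by_cases h3i : 3 ∣ i <;> by_cases h3j : 3 ∣ j
  · exact hmul_sHat_sHat_aux F r t i j hi hj (Or.inl h3i) (Or.inl h3j)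
  · rw [sHat_not_dvd F h3j t 0,
      hmul_sHat_sHat_aux F r 0 i j hi hj (Or.inl h3i) (Or.inr rfl),
      ← sMulS_not_right F h3j]
  · rw [sHat_not_dvd F h3i r 0,
      hmul_sHat_sHat_aux F 0 t i j hi hj (Or.inr rfl) (Or.inl h3j),
      ← sMulS_not_left F h3i]
  · rw [sHat_not_dvd F h3i r 0, sHat_not_dvd F h3j t 0,
      hmul_sHat_sHat_aux F 0 0 i j hi hj (Or.inr rfl) (Or.inr rfl),
      ← sMulS_not_left F h3i, ← sMulS_not_right F h3j]

lemma hmul_aHat_aHat (i j : ℤ) :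
    hmul F (aHat F i) (aHat F j)
      = (-2 : F) • (aHat F i + aHat F j) + sHat F (i : ZMod 3) (i - j).natAbs := by
  rw [aHat, aHat, hmul_single]
  simp only [mulB, aHat]

lemma key [CharP F 5] (b c : HatB) :
    tau0 F (mulB F b c) = hmul F (tau0B F b) (tau0B F c) := by
  have e1 : (-1 : ZMod 3) = 2 := by decide
  have e2 : (-2 : ZMod 3) = 1 := by decide
  rcases b with i | j | k | k <;> rcases c with i' | j' | k' | k' <;>
    simp only [mulB, tau0B]
  · rw [map_add, map_smul, map_add, tau0_aHat, tau0_aHat, tau0_sHat, hmul_aHat_aHat,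
      show ((-i : ℤ) : ZMod 3) = -((i : ℤ) : ZMod 3) by push_cast; ring,
      show ((-i) - (-i')).natAbs = (i - i').natAbs by omega]
  · rw [tau0_aMulS, neg_zero, hmul_aHat_sHat]
  · rw [tau0_aMulS, e1, hmul_aHat_sHat]
  · rw [tau0_aMulS, e2, hmul_aHat_sHat]
  · rw [tau0_aMulS, neg_zero, hmul_sHat_aHat]
  · rw [tau0_sMulS, neg_zero, hmul_sHat_sHat]
  · rw [tau0_sMulS, neg_zero, e1, hmul_sHat_sHat]
  · rw [tau0_sMulS, neg_zero, e2, hmul_sHat_sHat]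
  · rw [tau0_aMulS, e1, hmul_sHat_aHat]
  · rw [tau0_sMulS, neg_zero, e1, hmul_sHat_sHat, sMulS_comm]
  · rw [tau0_sMulS, e1, hmul_sHat_sHat]
  · rw [tau0_sMulS, e1, e2, hmul_sHat_sHat]
  · rw [tau0_aMulS, e2, hmul_sHat_aHat]
  · rw [tau0_sMulS, neg_zero, e2, hmul_sHat_sHat, sMulS_comm]
  · rw [tau0_sMulS, e1, e2, hmul_sHat_sHat, sMulS_comm]
  · rw [tau0_sMulS, e2, hmul_sHat_sHat]

lemma tau0_tau0 (x : HatH F) : tau0 F (tau0 F x) = x := by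
  induction x using Finsupp.induction_linear with
  | zero => simp
  | add u v hu hv => rw [map_add, map_add, hu, hv]
  | single b cb =>
    rw [show Finsupp.single b cb = cb • Finsupp.single b (1:F) by
        rw [Finsupp.smul_single, smul_eq_mul, mul_one],
      map_smul, map_smul, tau0_single]
    congr 1
    rcases b with i | j | k | k <;> simp only [tau0B]
    · rw [tau0_aHat, neg_neg]
      rfl
    · rw [tau0_sHat, neg_zero, sHat_s0]
    · rw [tau0_sHat, show (-2 : ZMod 3) = 1 by decide, sHat_s1]
    · rw [tau0_sHat, show (-1 : ZMod 3) = 2 by decide, sHat_s2]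

/-- The linear map `τ̂₀` is an algebra automorphism of `Ĥ`. -/
theorem tau0_automorphism [CharP F 5] :
    Function.Bijective (tau0 F) ∧
      ∀ x y : HatH F, tau0 F (hmul F x y) = hmul F (tau0 F x) (tau0 F y) := by
  constructor
  · exact Function.Involutive.bijective (fun x => tau0_tau0 F x)
  · intro x y
    induction x using Finsupp.induction_linear with
    | zero => simp only [hmul, map_zero, LinearMap.zero_apply]
    | add u v hu hv =>
      simp only [hmul, map_add, LinearMap.add_apply] at hu hv ⊢
      rw [hu, hv]
    | single b cb =>
      induction y using Finsupp.induction_linear with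
      | zero => simp only [hmul, map_zero]
      | add u v hu hv =>
        simp only [hmul, map_add] at hu hv ⊢
        rw [hu, hv]
      | single c cc =>
        rw [show Finsupp.single b cb = cb • Finsupp.single b (1:F) by
            rw [Finsupp.smul_single, smul_eq_mul, mul_one],
          show Finsupp.single c cc = cc • Finsupp.single c (1:F) by
            rw [Finsupp.smul_single, smul_eq_mul, mul_one]]
        simp only [hmul, map_smul, LinearMap.smul_apply, tau0_single]
        rw [show (hatMul F (Finsupp.single b (1:F))) (Finsupp.single c (1:F))
              = mulB F b c from hmul_single F b c,
          key F b c]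
        rfl

end HatAlgebra
end

section
/- For all i, j ∈ ℤ₊, in Ĥ one has ĉ_i · ĉ_j = σ̂_{i,j}. -/
namespace HatAlgebra

variable (F : Type*) [Field F]

/-- `ĉ_j := −2â₀ + (â_{−j} + â_j)`. -/
noncomputable def cHat (j : ℕ) : HatH F :=
  (-2 : F) • aHat F 0 + (aHat F (-(j : ℤ)) + aHat F (j : ℤ))

/-- `σ̂_{i,j} := ŝ_{0̄,i} + ŝ_{0̄,j} + ŝ_{−ī,|i−j|} + ŝ_{ī,|i−j|} + ŝ_{−ī,i+j} + ŝ_{ī,i+j}`. -/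
noncomputable def sigmaHat (i j : ℕ) : HatH F :=
  sHat F 0 i + sHat F 0 j + sHat F (-(i : ZMod 3)) (Nat.dist i j)
    + sHat F (i : ZMod 3) (Nat.dist i j)
    + sHat F (-(i : ZMod 3)) (i + j) + sHat F (i : ZMod 3) (i + j)

lemma sHat_cast_self (i : ℕ) : sHat F ((i : ZMod 3)) i = sHat F 0 i := by
  unfold sHat
  by_cases h : i = 0
  · simp [h]
  by_cases h3 : (3 : ℕ) ∣ i
  · have : ((i : ZMod 3)) = 0 := (ZMod.natCast_eq_zero_iff i 3).2 h3
    simp [h, h3, this]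
  · simp [h, h3]

lemma sHat_neg_cast_self (i : ℕ) : sHat F (-(i : ZMod 3)) i = sHat F 0 i := by
  unfold sHat
  by_cases h : i = 0
  · simp [h]
  by_cases h3 : (3 : ℕ) ∣ i
  · have : ((i : ZMod 3)) = 0 := (ZMod.natCast_eq_zero_iff i 3).2 h3
    simp [h, h3, this]
  · simp [h, h3]

lemma hatMul_aa (p q : ℤ) : hatMul F (aHat F p) (aHat F q) =
    (-2 : F) • (aHat F p + aHat F q) + sHat F (p : ZMod 3) (p - q).natAbs := by
  simp [hatMul, aHat, Finsupp.lift_apply, Finsupp.sum_single_index, mulB]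

/-- For all `i, j ∈ ℤ₊`, `ĉ_i · ĉ_j = σ̂_{i,j}`. -/
theorem cHat_mul_cHat [CharP F 5] (i j : ℕ) (hi : 0 < i) (hj : 0 < j) :
    hmul F (cHat F i) (cHat F j) = sigmaHat F i j := by
  have h5 : (5 : F) = 0 := CharP.cast_eq_zero F 5
  have d1 : ((0 : ℤ) - 0).natAbs = 0 := rfl
  have d2 : ((0 : ℤ) - -(j : ℤ)).natAbs = j := by omega
  have d3 : ((0 : ℤ) - (j : ℤ)).natAbs = j := by omega
  have d4 : ((-(i : ℤ)) - 0).natAbs = i := by omega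
  have d5 : (((i : ℤ)) - 0).natAbs = i := by omega
  have d6 : ((-(i : ℤ)) - -(j : ℤ)).natAbs = Nat.dist i j := by simp [Nat.dist]; omega
  have d7 : ((-(i : ℤ)) - (j : ℤ)).natAbs = i + j := by omega
  have d8 : (((i : ℤ)) - -(j : ℤ)).natAbs = i + j := by omega
  have d9 : (((i : ℤ)) - (j : ℤ)).natAbs = Nat.dist i j := by simp [Nat.dist]; omega
  unfold hmul cHat sigmaHat
  simp only [map_add, map_smul, LinearMap.add_apply, LinearMap.smul_apply, hatMul_aa,
    d1, d2, d3, d4, d5, d6, d7, d8, d9, Int.cast_zero, Int.cast_neg, Int.cast_natCast,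
    sHat_zero, sHat_cast_self, sHat_neg_cast_self]
  match_scalars
  all_goals
    first
    | ring1
    | linear_combination h5
    | linear_combination -h5

end HatAlgebra
end

section
/- For every i ∈ ℤ₊, in Ĥ one has â₀ · v̂_i = 2 v̂_i; that is, v̂_i is a 2-eigenvector of the multiplication operator ad_{â₀} : x ↦ â₀·x. -/
namespace HatAlgebra

variable (F : Type*) [Field F]

/-- `v̂_i := −2â₀ + (â_i + â_{−i}) − ŝ_{0̄,i}`. -/
noncomputable def vHat (i : ℕ) : HatH F :=
  (-2 : F) • aHat F 0 + (aHat F (i : ℤ) + aHat F (-(i : ℤ))) - sHat F 0 i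

/-- For every `i ∈ ℤ₊`, `v̂_i` is a `2`-eigenvector of `ad_{â₀}`. -/
theorem vHat_two_eigenvector [CharP F 5] (i : ℕ) (hi : 0 < i) :
    hmul F (aHat F 0) (vHat F i) = (2 : F) • vHat F i := by
  have h5 : (5 : F) = 0 := by exact_mod_cast CharP.cast_eq_zero F 5
  have hs : sHat F 0 i = Finsupp.single (HatB.s0 ⟨i, hi⟩) (1 : F) := by
    unfold sHat
    rw [dif_neg hi.ne']
    split_ifs <;> simp_all
  have key : ∀ b : HatB, hmul F (aHat F 0) (Finsupp.single b (1 : F)) = mulB F (.a 0) b := by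
    intro b
    simp [hmul, hatMul, aHat]
  have expand : hmul F (aHat F 0) (vHat F i) =
      (-2 : F) • mulB F (.a 0) (.a 0) + (mulB F (.a 0) (.a (i : ℤ)) +
        mulB F (.a 0) (.a (-(i : ℤ)))) - mulB F (.a 0) (.s0 ⟨i, hi⟩) := by
    rw [vHat, hs]
    show hatMul F (aHat F 0) _ = _
    rw [map_sub, map_add, map_add, map_smul]
    simp only [← key]
    rfl
  have h1 : mulB F (.a 0) (.a 0) = (-4 : F) • aHat F 0 := by
    simp only [mulB]
    rw [show ((0 : ℤ) - 0).natAbs = 0 by norm_num]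
    rw [show sHat F ((0 : ℤ) : ZMod 3) 0 = 0 from dif_pos rfl]
    rw [smul_add]
    module
  have h2 : mulB F (.a 0) (.a (i : ℤ)) =
      (-2 : F) • (aHat F 0 + aHat F (i : ℤ)) + sHat F 0 i := by
    simp only [mulB]
    norm_num
  have h3 : mulB F (.a 0) (.a (-(i : ℤ))) =
      (-2 : F) • (aHat F 0 + aHat F (-(i : ℤ))) + sHat F 0 i := by
    simp only [mulB]
    norm_num
  have hc : hatC ((0 : ℤ) : ZMod 3) 0 = 0 := by decide
  have h4 : mulB F (.a 0) (.s0 ⟨i, hi⟩) =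
      (-2 : F) • aHat F 0 + (aHat F (-(i : ℤ)) + aHat F (i : ℤ)) - sHat F 0 i := by
    simp only [mulB, aMulS, hc]
    norm_num
  rw [expand, h1, h2, h3, h4, vHat]
  have : ∀ x y z w : HatH F,
      (-2 : F) • ((-4 : F) • x) + (((-2 : F) • (x + y) + w) + ((-2 : F) • (x + z) + w))
        - ((-2 : F) • x + (z + y) - w)
      = (2 : F) • ((-2 : F) • x + (y + z) - w) + (5 : F) • ((2 : F) • x - y - z + w) := by
    intro x y z w
    module
  rw [this, h5]
  simp

end HatAlgebra
end
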